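/- arXiv:2006.02532 — 4 statements merged into one kernel-verified Lean document; each statement's English description precedes it below -/
import Mathlib

section
/- Let (N, μ) be a measure space with μ(N) < ∞ and let b : ι → L²(N, μ; ℝ) be a Hilbert basis (orthonormal basis) of the real Hilbert space L²(N, μ; ℝ). Let (M, d) be a metric space, let c, λ, δ ≥ 0, and let φ : M → ℝ be Lipschitz with constant c·λ. Let T1, T2 : N → M be maps that are δ-close (d(T1 x, T2 x) ≤ δ for all x ∈ N) and such that the function x ↦ φ(T1 x) − φ(T2 x) is measurable; let g ∈ L²(N, μ; ℝ) denote its almost-everywhere equivalence class (which lies in L² since it is bounded by δ·c·λ on a finite measure space). Then ∑'_{j∈ι} ⟪b j, g⟫² ≤ (δ·c·λ)² · μ(N). -/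
open MeasureTheory

/-- Theorem 1 of the paper: if `T1, T2 : N → M` are `δ`-close and `φ : M → ℝ` is Lipschitz
with constant `c·λ` (abstracting the eigenfunction gradient bound), then the coefficients of
the class `g` of `x ↦ φ(T1 x) − φ(T2 x)` in any Hilbert basis of `L²(N, μ; ℝ)` satisfy
`∑' j, ⟪b j, g⟫² ≤ (δ·c·λ)² · μ(N)`. -/
theorem tsum_inner_sq_le_of_lipschitz_of_close
    {N : Type*} [MeasurableSpace N] (μ : Measure N) [IsFiniteMeasure μ]
    {ι : Type*} (b : HilbertBasis ι ℝ (Lp ℝ 2 μ))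
    {M : Type*} [MetricSpace M] (c lam δ : ℝ) (hc : 0 ≤ c) (hlam : 0 ≤ lam) (hδ : 0 ≤ δ)
    (φ : M → ℝ) (hφ : ∀ x y, dist (φ x) (φ y) ≤ c * lam * dist x y)
    (T1 T2 : N → M) (hclose : ∀ x, dist (T1 x) (T2 x) ≤ δ)
    (hmeas : Measurable fun x => φ (T1 x) - φ (T2 x))
    (g : Lp ℝ 2 μ) (hg : (g : N → ℝ) =ᵐ[μ] fun x => φ (T1 x) - φ (T2 x)) :
    ∑' j : ι, (inner ℝ (b j) g : ℝ) ^ 2 ≤ (δ * c * lam) ^ 2 * (μ Set.univ).toReal := by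
  have hC : 0 ≤ δ * c * lam := by positivity
  -- pointwise a.e. bound on g
  have hbound : ∀ᵐ x ∂μ, ‖(g : N → ℝ) x‖ ≤ δ * c * lam := by
    filter_upwards [hg] with x hx
    rw [hx]
    have h1 : dist (φ (T1 x)) (φ (T2 x)) ≤ c * lam * δ :=
      (hφ _ _).trans (mul_le_mul_of_nonneg_left (hclose x) (by positivity))
    simpa [Real.dist_eq, Real.norm_eq_abs, mul_comm, mul_assoc, mul_left_comm] using h1
  have hnorm : ‖g‖ ≤ (measureUnivNNReal μ : ℝ) ^ ((2 : ENNReal).toReal)⁻¹ * (δ * c * lam) :=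
    Lp.norm_le_of_ae_bound hC hbound
  -- Parseval
  have hpars : ∑' j : ι, (inner ℝ (b j) g : ℝ) ^ 2 = ‖g‖ ^ 2 := by
    have := b.tsum_inner_mul_inner g g
    calc ∑' j : ι, (inner ℝ (b j) g : ℝ) ^ 2
        = ∑' j : ι, (inner ℝ g (b j) : ℝ) * inner ℝ (b j) g := by
          refine tsum_congr fun j => ?_
          rw [real_inner_comm g (b j)]; ring
      _ = (inner ℝ g g : ℝ) := this
      _ = ‖g‖ ^ 2 := real_inner_self_eq_norm_sq g
  rw [hpars]
  have h2 : ((2 : ENNReal).toReal)⁻¹ = (1 / 2 : ℝ) := by norm_num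
  have hmeq : ((measureUnivNNReal μ : ℝ) ^ ((2 : ENNReal).toReal)⁻¹) ^ 2
      = (μ Set.univ).toReal := by
    rw [h2, ← Real.rpow_natCast ((measureUnivNNReal μ : ℝ) ^ (1 / 2 : ℝ)) 2,
      ← Real.rpow_mul (measureUnivNNReal μ).coe_nonneg]
    norm_num
    rw [measureUnivNNReal, ENNReal.coe_toNNReal_eq_toReal]
  calc ‖g‖ ^ 2 ≤ ((measureUnivNNReal μ : ℝ) ^ ((2 : ENNReal).toReal)⁻¹ * (δ * c * lam)) ^ 2 := by
        apply pow_le_pow_left₀ (norm_nonneg g) hnorm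
    _ = (δ * c * lam) ^ 2 * (μ Set.univ).toReal := by rw [mul_pow, hmeq]; ring
end

section
/- Let H and K be real Hilbert spaces, let S1, S2 : H → K be linear isometries, and let Q : H → H and P : K → K be the orthogonal projections onto complete subspaces of H and K respectively. Let f ∈ H and ε, δ ≥ 0 satisfy ‖f − Q f‖ ≤ √ε · ‖f‖, and set g = S1 f − S2 f with ‖g − P g‖ ≤ √δ · ‖g‖. Then ‖P(S1(Q f) − S2(Q f))‖ ≥ (1 − √δ)·‖g‖ − 2·√ε·‖f‖. -/
open MeasureTheory

lemma proj_norm_le' {K : Type*} [NormedAddCommGroup K] [InnerProductSpace ℝ K]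
    (V : Submodule ℝ K) [CompleteSpace V] (x : K) :
    ‖(Submodule.orthogonalProjectionOnto V x : K)‖ ≤ ‖x‖ := by
  have := (Submodule.orthogonalProjectionOnto V).le_opNorm x
  calc ‖(Submodule.orthogonalProjectionOnto V x : K)‖ = ‖Submodule.orthogonalProjectionOnto V x‖ := rfl
    _ ≤ ‖Submodule.orthogonalProjectionOnto V‖ * ‖x‖ := this
    _ ≤ 1 * ‖x‖ := by
        exact mul_le_mul_of_nonneg_right (Submodule.orthogonalProjectionOnto_norm_le V) (norm_nonneg x)
    _ = ‖x‖ := one_mul _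

/-- Abstract Hilbert-space form of the key inequality of Appendix B: if `S1, S2` are linear
isometries, `Q`, `P` are orthogonal projections onto complete subspaces, `f` is well captured
by `Q` up to relative error `√ε`, and `g = S1 f − S2 f` is well captured by `P` up to relative
error `√δ`, then `‖P (S1 (Q f) − S2 (Q f))‖ ≥ (1 − √δ)·‖g‖ − 2√ε·‖f‖`. -/
theorem norm_proj_sub_ge_of_isometries
    {H K : Type*} [NormedAddCommGroup H] [InnerProductSpace ℝ H]
    [NormedAddCommGroup K] [InnerProductSpace ℝ K]
    (S1 S2 : H →ₗᵢ[ℝ] K)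
    (U : Submodule ℝ H) (V : Submodule ℝ K) [CompleteSpace U] [CompleteSpace V]
    (f : H) (ε δ : ℝ) (hε : 0 ≤ ε) (hδ : 0 ≤ δ)
    (hf : ‖f - (Submodule.orthogonalProjectionOnto U f : H)‖ ≤ Real.sqrt ε * ‖f‖)
    (g : K) (hgdef : g = S1 f - S2 f)
    (hg : ‖g - (Submodule.orthogonalProjectionOnto V g : K)‖ ≤ Real.sqrt δ * ‖g‖) :
    ‖(Submodule.orthogonalProjectionOnto V
        (S1 (Submodule.orthogonalProjectionOnto U f : H) - S2 (Submodule.orthogonalProjectionOnto U f : H)) : K)‖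
      ≥ (1 - Real.sqrt δ) * ‖g‖ - 2 * Real.sqrt ε * ‖f‖ := by
  set u : H := (Submodule.orthogonalProjectionOnto U f : H) with hu
  set w : K := S1 u - S2 u with hw
  -- g - w = S1 (f - u) - S2 (f - u)
  have hgw : g - w = S1 (f - u) - S2 (f - u) := by
    simp [hgdef, hw, map_sub]; abel
  have hgw_norm : ‖g - w‖ ≤ 2 * (Real.sqrt ε * ‖f‖) := by
    rw [hgw]
    calc ‖S1 (f - u) - S2 (f - u)‖ ≤ ‖S1 (f - u)‖ + ‖S2 (f - u)‖ := norm_sub_le _ _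
      _ = ‖f - u‖ + ‖f - u‖ := by rw [S1.norm_map, S2.norm_map]
      _ ≤ Real.sqrt ε * ‖f‖ + Real.sqrt ε * ‖f‖ := add_le_add hf hf
      _ = 2 * (Real.sqrt ε * ‖f‖) := by ring
  -- ‖P w‖ ≥ ‖P g‖ - ‖P (g - w)‖ ≥ ‖P g‖ - ‖g - w‖
  have h1 : ‖(Submodule.orthogonalProjectionOnto V g : K)‖ - ‖g - w‖ ≤ ‖(Submodule.orthogonalProjectionOnto V w : K)‖ := by
    have hsub : (Submodule.orthogonalProjectionOnto V g : K) - (Submodule.orthogonalProjectionOnto V w : K)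
        = (Submodule.orthogonalProjectionOnto V (g - w) : K) := by
      simp only [hw, map_sub, Submodule.coe_sub]
    have h2 : ‖(Submodule.orthogonalProjectionOnto V g : K)‖ - ‖(Submodule.orthogonalProjectionOnto V w : K)‖
        ≤ ‖(Submodule.orthogonalProjectionOnto V (g - w) : K)‖ := by
      rw [← hsub]; exact norm_sub_norm_le _ _
    have h3 := proj_norm_le' V (g - w)
    linarith
  -- ‖P g‖ ≥ ‖g‖ - ‖g - P g‖ ≥ (1 - √δ)‖g‖
  have h4 : (1 - Real.sqrt δ) * ‖g‖ ≤ ‖(Submodule.orthogonalProjectionOnto V g : K)‖ := by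
    have := norm_sub_norm_le g (g - (Submodule.orthogonalProjectionOnto V g : K))
    simp only [sub_sub_cancel] at this
    nlinarith [norm_nonneg g]
  linarith
end

section
/- Let H and K be real Hilbert spaces, let S1, S2 : H → K be linear isometries, and let Q : H → H and P : K → K be the orthogonal projections onto complete subspaces of H and K respectively. Let f ∈ H with f ≠ 0 and let ε, δ ≥ 0 satisfy ‖f − Q f‖ ≤ √ε · ‖f‖; set g = S1 f − S2 f and assume ‖g − P g‖ ≤ √δ · ‖g‖. Then the operator norm of the composition P ∘ (S1 − S2) ∘ Q (as a bounded linear map from H to K) satisfies ‖P ∘ (S1 − S2) ∘ Q‖ ≥ (1 − √δ)·‖g‖/‖f‖ − 2·√ε. -/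
open MeasureTheory

/-- Abstract Hilbert-space form of the lower bound of Appendix B: under the hypotheses of the
key inequality, the compressed operator `P ∘ (S1 − S2) ∘ Q` (the difference of the leading
principal functional map submatrices) has operator norm at least
`(1 − √δ)·‖g‖/‖f‖ − 2√ε`. -/
theorem opNorm_proj_comp_sub_ge
    {H K : Type*} [NormedAddCommGroup H] [InnerProductSpace ℝ H]
    [NormedAddCommGroup K] [InnerProductSpace ℝ K]
    (S1 S2 : H →ₗᵢ[ℝ] K)
    (U : Submodule ℝ H) (V : Submodule ℝ K) [CompleteSpace U] [CompleteSpace V]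
    (f : H) (hf0 : f ≠ 0) (ε δ : ℝ) (hε : 0 ≤ ε) (hδ : 0 ≤ δ)
    (hf : ‖f - (U.orthogonalProjectionOnto f : H)‖ ≤ Real.sqrt ε * ‖f‖)
    (g : K) (hgdef : g = S1 f - S2 f)
    (hg : ‖g - (V.orthogonalProjectionOnto g : K)‖ ≤ Real.sqrt δ * ‖g‖) :
    ‖(V.subtypeL.comp V.orthogonalProjectionOnto).comp
        ((S1.toContinuousLinearMap - S2.toContinuousLinearMap).comp
          (U.subtypeL.comp U.orthogonalProjectionOnto))‖
      ≥ (1 - Real.sqrt δ) * ‖g‖ / ‖f‖ - 2 * Real.sqrt ε := by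
  set T := (V.subtypeL.comp V.orthogonalProjectionOnto).comp
        ((S1.toContinuousLinearMap - S2.toContinuousLinearMap).comp
          (U.subtypeL.comp U.orthogonalProjectionOnto)) with hT
  have hfpos : (0:ℝ) < ‖f‖ := norm_pos_iff.mpr hf0
  set q : H := (U.orthogonalProjectionOnto f : H) with hq
  have hTf : T f = (V.orthogonalProjectionOnto (S1 q - S2 q) : K) := by
    simp [hT]
    rfl
  -- projection is norm-nonincreasing
  have hproj : ∀ v : K, ‖(V.orthogonalProjectionOnto v : K)‖ ≤ ‖v‖ := by
    intro v
    have h1 := V.orthogonalProjectionOnto.le_opNorm v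
    have h2 := Submodule.orthogonalProjectionOnto_norm_le V
    have h3 : ‖(V.orthogonalProjectionOnto v : K)‖ = ‖V.orthogonalProjectionOnto v‖ := rfl
    nlinarith [norm_nonneg v]
  -- difference estimate
  have hdiff : ‖(S1 q - S2 q) - g‖ ≤ 2 * (Real.sqrt ε * ‖f‖) := by
    have h1 : (S1 q - S2 q) - g = S1 (q - f) - S2 (q - f) := by
      rw [hgdef]; simp [map_sub]; abel
    have h2 : ‖S1 (q - f) - S2 (q - f)‖ ≤ ‖S1 (q - f)‖ + ‖S2 (q - f)‖ :=
      norm_sub_le _ _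
    have h3 : ‖q - f‖ = ‖f - q‖ := norm_sub_rev _ _
    rw [h1]
    calc ‖S1 (q - f) - S2 (q - f)‖ ≤ ‖S1 (q - f)‖ + ‖S2 (q - f)‖ := h2
      _ = ‖q - f‖ + ‖q - f‖ := by rw [S1.norm_map, S2.norm_map]
      _ = 2 * ‖f - q‖ := by rw [h3]; ring
      _ ≤ 2 * (Real.sqrt ε * ‖f‖) := by nlinarith [hf]
  -- lower bound on ‖T f‖
  have hPg : (1 - Real.sqrt δ) * ‖g‖ ≤ ‖(V.orthogonalProjectionOnto g : K)‖ := by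
    have := norm_sub_norm_le g ((V.orthogonalProjectionOnto g : K))
    nlinarith [hg]
  have hTf_lb : (1 - Real.sqrt δ) * ‖g‖ - 2 * (Real.sqrt ε * ‖f‖) ≤ ‖T f‖ := by
    rw [hTf]
    have h1 : ‖(V.orthogonalProjectionOnto g : K)‖ -
        ‖(V.orthogonalProjectionOnto (S1 q - S2 q) : K) - (V.orthogonalProjectionOnto g : K)‖
        ≤ ‖(V.orthogonalProjectionOnto (S1 q - S2 q) : K)‖ := by
      have := norm_sub_norm_le ((V.orthogonalProjectionOnto g : K))
        ((V.orthogonalProjectionOnto (S1 q - S2 q) : K))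
      rw [norm_sub_rev] at this
      linarith
    have h2 : ‖(V.orthogonalProjectionOnto (S1 q - S2 q) : K) - (V.orthogonalProjectionOnto g : K)‖
        ≤ 2 * (Real.sqrt ε * ‖f‖) := by
      have heq : (V.orthogonalProjectionOnto (S1 q - S2 q) : K) - (V.orthogonalProjectionOnto g : K)
          = (V.orthogonalProjectionOnto ((S1 q - S2 q) - g) : K) := by
        simp [map_sub]
      rw [heq]
      exact (hproj _).trans hdiff
    linarith
  -- conclude via ‖T f‖ ≤ ‖T‖ * ‖f‖
  have hTop := T.le_opNorm f
  rw [ge_iff_le, sub_le_iff_le_add, div_le_iff₀ hfpos]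
  have hring : (‖T‖ + 2 * Real.sqrt ε) * ‖f‖ = ‖T‖ * ‖f‖ + 2 * (Real.sqrt ε * ‖f‖) := by ring
  linarith
end

section
/- Let (M, μ) and (N, ν) be measure spaces and let T1, T2 : N → M be measure-preserving maps; let S1, S2 : L²(M, μ; ℝ) → L²(N, ν; ℝ) denote the induced composition operators (which are linear isometries). Let R ⊆ M be measurable with 0 < μ(R) < ∞ and set P_l = T_l⁻¹(R) for l = 1, 2. Let (b^M_i)_{i∈ℕ} and (b^N_j)_{j∈ℕ} be Hilbert bases of L²(M, μ; ℝ) and L²(N, ν; ℝ), fix k_M, k_N ∈ ℕ and ε, δ ≥ 0, let f ∈ L²(M) be the class of the indicator 1_R and g = S1 f − S2 f ∈ L²(N) (the class of 1_{P1} − 1_{P2}). Assume ‖f − ∑_{i < k_M} ⟪b^M_i, f⟫ b^M_i‖² ≤ ε · μ(R) and ‖g − ∑_{j < k_N} ⟪b^N_j, g⟫ b^N_j‖² ≤ δ · ν(P1 Δ P2). Define the k_N × k_M real matrices C_l by C_l(j, i) = ⟪b^N_j, S_l(b^M_i)⟫ for l = 1, 2. Then the Frobenius norm satisfies √(∑_{j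 < k_N} ∑_{i < k_M} (C_1(j,i) − C_2(j,i))²) ≥ √(ν(P1 Δ P2)) · (1 − √δ) / √(μ(R)) − 2·√ε. -/
open MeasureTheory

lemma norm_sq_eq_measure' {α : Type*} [MeasurableSpace α] {μ : Measure α} {s : Set α}
    (hs : MeasurableSet s) (h : Lp ℝ 2 μ)
    (hh : (fun a => (h : α → ℝ) a * (h : α → ℝ) a) =ᵐ[μ] s.indicator fun _ => (1 : ℝ)) :
    ‖h‖ ^ 2 = (μ s).toReal := by
  have h1 : (inner ℝ h h : ℝ) = ∫ a, (h : α → ℝ) a * (h : α → ℝ) a ∂μ := by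
    rw [L2.inner_def]
    simp [RCLike.inner_apply]
    simp only [sq]
  rw [← real_inner_self_eq_norm_sq, h1, integral_congr_ae hh]
  exact integral_indicator_one hs


/-- Main lower-bound result of Appendix B: two measure-preserving pointwise maps whose
pre-images of some region `R` differ on a set of large measure must have different
low-frequency functional map submatrices.  Here `S1, S2` are the composition (pull-back)
operators, which are linear isometries of `L²`, `bM`, `bN` are Hilbert bases,
`f` is the class of the indicator of `R`, `g = S1 f − S2 f`, and the hypotheses state that
`f` (resp. `g`) is captured by the first `kM` (resp. `kN`) basis functions up to relative
error `ε` (resp. `δ`).  The conclusion bounds the Frobenius norm of the difference of the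
leading `kN × kM` functional map submatrices from below. -/
theorem frobenius_sub_functionalMap_ge
    {M N : Type*} [MeasurableSpace M] [MeasurableSpace N]
    (μ : Measure M) (ν : Measure N)
    (T1 T2 : N → M) (hT1 : MeasurePreserving T1 ν μ) (hT2 : MeasurePreserving T2 ν μ)
    (S1 S2 : Lp ℝ 2 μ →ₗᵢ[ℝ] Lp ℝ 2 ν)
    (hS1 : ∀ h : Lp ℝ 2 μ, (S1 h : N → ℝ) =ᵐ[ν] fun x => h (T1 x))
    (hS2 : ∀ h : Lp ℝ 2 μ, (S2 h : N → ℝ) =ᵐ[ν] fun x => h (T2 x))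
    (R : Set M) (hR : MeasurableSet R) (hRpos : 0 < μ R) (hRfin : μ R < ⊤)
    (bM : HilbertBasis ℕ ℝ (Lp ℝ 2 μ)) (bN : HilbertBasis ℕ ℝ (Lp ℝ 2 ν))
    (kM kN : ℕ) (ε δ : ℝ) (hε : 0 ≤ ε) (hδ : 0 ≤ δ)
    (f : Lp ℝ 2 μ) (hf : (f : M → ℝ) =ᵐ[μ] R.indicator fun _ => (1 : ℝ))
    (g : Lp ℝ 2 ν) (hg : g = S1 f - S2 f)
    (hfapprox : ‖f - ∑ i ∈ Finset.range kM, (inner ℝ (bM i) f : ℝ) • bM i‖ ^ 2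
        ≤ ε * (μ R).toReal)
    (hgapprox : ‖g - ∑ j ∈ Finset.range kN, (inner ℝ (bN j) g : ℝ) • bN j‖ ^ 2
        ≤ δ * (ν (symmDiff (T1 ⁻¹' R) (T2 ⁻¹' R))).toReal) :
    Real.sqrt (∑ j : Fin kN, ∑ i : Fin kM,
        ((inner ℝ (bN (j : ℕ)) (S1 (bM (i : ℕ))) : ℝ)
          - (inner ℝ (bN (j : ℕ)) (S2 (bM (i : ℕ))) : ℝ)) ^ 2)
      ≥ Real.sqrt (ν (symmDiff (T1 ⁻¹' R) (T2 ⁻¹' R))).toReal * (1 - Real.sqrt δ)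
          / Real.sqrt (μ R).toReal - 2 * Real.sqrt ε := by
  classical
  set P1 : Set N := T1 ⁻¹' R with hP1def
  set P2 : Set N := T2 ⁻¹' R with hP2def
  have hP1 : MeasurableSet P1 := hT1.measurable hR
  have hP2 : MeasurableSet P2 := hT2.measurable hR
  have hΔmeas : MeasurableSet (symmDiff P1 P2) := hP1.symmDiff hP2
  -- a.e. description of g
  have hc1 : (fun x => (f : M → ℝ) (T1 x)) =ᵐ[ν]
      fun x => R.indicator (fun _ => (1 : ℝ)) (T1 x) :=
    hT1.quasiMeasurePreserving.ae_eq_comp hf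
  have hc2 : (fun x => (f : M → ℝ) (T2 x)) =ᵐ[ν]
      fun x => R.indicator (fun _ => (1 : ℝ)) (T2 x) :=
    hT2.quasiMeasurePreserving.ae_eq_comp hf
  have hsub : (g : N → ℝ) =ᵐ[ν] fun x => (S1 f : N → ℝ) x - (S2 f : N → ℝ) x := by
    rw [hg]; exact Lp.coeFn_sub _ _
  have hgae : (g : N → ℝ) =ᵐ[ν]
      fun x => P1.indicator (fun _ => (1 : ℝ)) x - P2.indicator (fun _ => (1 : ℝ)) x := by
    filter_upwards [hsub, hS1 f, hS2 f, hc1, hc2] with x hx e1 e2 e3 e4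
    rw [hx, e1, e2, e3, e4]
    simp [Set.indicator, hP1def, hP2def, Set.mem_preimage]
  -- norms
  have hfnorm : ‖f‖ ^ 2 = (μ R).toReal := by
    refine norm_sq_eq_measure' hR f ?_
    filter_upwards [hf] with a ha
    rw [ha]
    by_cases h : a ∈ R <;> simp [h]
  have hgnorm : ‖g‖ ^ 2 = (ν (symmDiff P1 P2)).toReal := by
    refine norm_sq_eq_measure' hΔmeas g ?_
    filter_upwards [hgae] with a ha
    rw [ha]
    by_cases h1 : a ∈ P1 <;> by_cases h2 : a ∈ P2 <;>
      simp [Set.indicator, h1, h2, Set.mem_symmDiff]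
  set r : ℝ := Real.sqrt (μ R).toReal with hrdef
  set s : ℝ := Real.sqrt (ν (symmDiff P1 P2)).toReal with hsdef
  have hrpos : 0 < r := Real.sqrt_pos.2 (ENNReal.toReal_pos hRpos.ne' hRfin.ne)
  have hr2 : r ^ 2 = (μ R).toReal := Real.sq_sqrt ENNReal.toReal_nonneg
  have hs2 : s ^ 2 = (ν (symmDiff P1 P2)).toReal := Real.sq_sqrt ENNReal.toReal_nonneg
  have hfr : ‖f‖ = r := by
    rw [hrdef, ← hfnorm, Real.sqrt_sq (norm_nonneg _)]
  have hgs : ‖g‖ = s := by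
    rw [hsdef, ← hgnorm, Real.sqrt_sq (norm_nonneg _)]
  -- abbreviations
  set c : ℕ → ℝ := fun i => (inner ℝ (bM i) f : ℝ) with hcdef
  set w : ℕ → ℝ := fun j => (inner ℝ (bN j) g : ℝ) with hwdef
  set fk : Lp ℝ 2 μ := ∑ i ∈ Finset.range kM, c i • bM i with hfkdef
  set gk : Lp ℝ 2 ν := ∑ j ∈ Finset.range kN, w j • bN j with hgkdef
  set a : ℕ → ℕ → ℝ := fun j i =>
    (inner ℝ (bN j) (S1 (bM i)) : ℝ) - (inner ℝ (bN j) (S2 (bM i)) : ℝ) with hadef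
  set F2 : ℝ := ∑ j ∈ Finset.range kN, ∑ i ∈ Finset.range kM, a j i ^ 2 with hF2def
  have hF2nonneg : 0 ≤ F2 := Finset.sum_nonneg fun j _ =>
    Finset.sum_nonneg fun i _ => sq_nonneg _
  -- the LHS equals √F2
  have hLHS : (∑ j : Fin kN, ∑ i : Fin kM,
      ((inner ℝ (bN (j : ℕ)) (S1 (bM (i : ℕ))) : ℝ)
        - (inner ℝ (bN (j : ℕ)) (S2 (bM (i : ℕ))) : ℝ)) ^ 2) = F2 := by
    calc (∑ j : Fin kN, ∑ i : Fin kM,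
        ((inner ℝ (bN (j : ℕ)) (S1 (bM (i : ℕ))) : ℝ)
          - (inner ℝ (bN (j : ℕ)) (S2 (bM (i : ℕ))) : ℝ)) ^ 2)
        = ∑ j : Fin kN, ∑ i ∈ Finset.range kM, a (↑j) i ^ 2 :=
          Finset.sum_congr rfl fun j _ =>
            Fin.sum_univ_eq_sum_range (fun i => a (↑j) i ^ 2) kM
      _ = F2 := Fin.sum_univ_eq_sum_range (fun j => ∑ i ∈ Finset.range kM, a j i ^ 2) kN
  -- Bessel for f
  have hC2 : (∑ i ∈ Finset.range kM, c i ^ 2) ≤ r ^ 2 := by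
    have h := bM.orthonormal.sum_inner_products_le (s := Finset.range kM) f
    rw [hfr] at h
    simpa [Real.norm_eq_abs, sq_abs] using h
  have hC2nonneg : (0:ℝ) ≤ ∑ i ∈ Finset.range kM, c i ^ 2 :=
    Finset.sum_nonneg fun i _ => sq_nonneg _
  -- truncation errors
  set e : ℝ := ‖f - fk‖ with hedef
  set d : ℝ := ‖g - gk‖ with hddef
  have he : e ≤ Real.sqrt ε * r := by
    have h1 : e ^ 2 ≤ ε * (μ R).toReal := hfapprox
    have h2 : e = Real.sqrt (e ^ 2) := (Real.sqrt_sq (norm_nonneg _)).symm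
    rw [h2]
    calc Real.sqrt (e ^ 2) ≤ Real.sqrt (ε * (μ R).toReal) := Real.sqrt_le_sqrt h1
      _ = Real.sqrt ε * r := by rw [Real.sqrt_mul hε]
  have hd : d ≤ Real.sqrt δ * s := by
    have h2 : d = Real.sqrt (d ^ 2) := (Real.sqrt_sq (norm_nonneg _)).symm
    rw [h2]
    calc Real.sqrt (d ^ 2) ≤ Real.sqrt (δ * (ν (symmDiff P1 P2)).toReal) :=
          Real.sqrt_le_sqrt hgapprox
      _ = Real.sqrt δ * s := by rw [Real.sqrt_mul hδ]
  have he0 : 0 ≤ e := norm_nonneg _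
  -- gk norm
  have hgk2 : ‖gk‖ ^ 2 = ∑ j ∈ Finset.range kN, w j ^ 2 := by
    have h := bN.orthonormal.inner_sum w w (Finset.range kN)
    rw [← real_inner_self_eq_norm_sq, hgkdef, h]
    simp [sq]
  -- lower bound on ‖gk‖
  have hgklow : s - d ≤ ‖gk‖ := by
    have h1 : gk + (g - gk) = g := by abel
    have h2 : ‖g‖ ≤ ‖gk‖ + ‖g - gk‖ := by
      calc ‖g‖ = ‖gk + (g - gk)‖ := by rw [h1]
        _ ≤ ‖gk‖ + ‖g - gk‖ := norm_add_le _ _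
    rw [hgs] at h2
    linarith
  -- u and v
  set u : ℕ → ℝ := fun j => (inner ℝ (bN j) (S1 fk - S2 fk) : ℝ) with hudef
  set v : ℕ → ℝ := fun j => (inner ℝ (bN j) (S1 (f - fk) - S2 (f - fk)) : ℝ) with hvdef
  have hw : ∀ j, w j = u j + v j := by
    intro j
    have h1 : g = (S1 fk - S2 fk) + (S1 (f - fk) - S2 (f - fk)) := by
      rw [hg, map_sub, map_sub]
      abel
    show (inner ℝ (bN j) g : ℝ) = _
    rw [h1, inner_add_right]
  have hu : ∀ j, u j = ∑ i ∈ Finset.range kM, c i * a j i := by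
    intro j
    show (inner ℝ (bN j) (S1 fk - S2 fk) : ℝ) = _
    rw [hfkdef, map_sum, map_sum, inner_sub_right, inner_sum, inner_sum,
      ← Finset.sum_sub_distrib]
    refine Finset.sum_congr rfl fun i _ => ?_
    rw [_root_.map_smul, _root_.map_smul, inner_smul_right, inner_smul_right]
    show c i * _ - c i * _ = c i * a j i
    simp only [hadef]
    ring_nf
  -- U2 bound
  have hU2 : (∑ j ∈ Finset.range kN, u j ^ 2)
      ≤ (∑ i ∈ Finset.range kM, c i ^ 2) * F2 := by
    rw [hF2def, Finset.mul_sum]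
    refine Finset.sum_le_sum fun j _ => ?_
    rw [hu j]
    exact Finset.sum_mul_sq_le_sq_mul_sq _ _ _
  -- V2 bound via Bessel
  have hV2 : (∑ j ∈ Finset.range kN, v j ^ 2) ≤ (2 * e) ^ 2 := by
    have h := bN.orthonormal.sum_inner_products_le (s := Finset.range kN)
      (S1 (f - fk) - S2 (f - fk))
    have hAz : ‖S1 (f - fk) - S2 (f - fk)‖ ≤ 2 * e := by
      calc ‖S1 (f - fk) - S2 (f - fk)‖ ≤ ‖S1 (f - fk)‖ + ‖S2 (f - fk)‖ := norm_sub_le _ _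
        _ = 2 * e := by rw [S1.norm_map, S2.norm_map]; rw [hedef]; ring
    have h2 : (∑ j ∈ Finset.range kN, v j ^ 2) ≤ ‖S1 (f - fk) - S2 (f - fk)‖ ^ 2 := by
      simp only [Real.norm_eq_abs, sq_abs] at h
      exact h
    calc (∑ j ∈ Finset.range kN, v j ^ 2) ≤ ‖S1 (f - fk) - S2 (f - fk)‖ ^ 2 := h2
      _ ≤ (2 * e) ^ 2 := by
          apply pow_le_pow_left₀ (norm_nonneg _) hAz
  have hV2nonneg : (0:ℝ) ≤ ∑ j ∈ Finset.range kN, v j ^ 2 :=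
    Finset.sum_nonneg fun j _ => sq_nonneg _
  have hU2nonneg : (0:ℝ) ≤ ∑ j ∈ Finset.range kN, u j ^ 2 :=
    Finset.sum_nonneg fun j _ => sq_nonneg _
  -- triangle inequality for the coefficient vectors
  set U2 : ℝ := ∑ j ∈ Finset.range kN, u j ^ 2 with hU2def
  set V2 : ℝ := ∑ j ∈ Finset.range kN, v j ^ 2 with hV2def
  have huv : (∑ j ∈ Finset.range kN, u j * v j) ≤ Real.sqrt U2 * Real.sqrt V2 := by
    have h1 := Finset.sum_mul_sq_le_sq_mul_sq (Finset.range kN) u v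
    calc (∑ j ∈ Finset.range kN, u j * v j)
        ≤ |∑ j ∈ Finset.range kN, u j * v j| := le_abs_self _
      _ = Real.sqrt ((∑ j ∈ Finset.range kN, u j * v j) ^ 2) :=
          (Real.sqrt_sq_eq_abs _).symm
      _ ≤ Real.sqrt (U2 * V2) := Real.sqrt_le_sqrt h1
      _ = Real.sqrt U2 * Real.sqrt V2 := Real.sqrt_mul hU2nonneg _
  have hgk_le : ‖gk‖ ≤ Real.sqrt U2 + Real.sqrt V2 := by
    have hsum : ‖gk‖ ^ 2 = U2 + 2 * (∑ j ∈ Finset.range kN, u j * v j) + V2 := by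
      rw [hgk2]
      calc (∑ j ∈ Finset.range kN, w j ^ 2)
          = ∑ j ∈ Finset.range kN, (u j ^ 2 + 2 * (u j * v j) + v j ^ 2) :=
            Finset.sum_congr rfl fun j _ => by rw [hw j]; ring
        _ = U2 + 2 * (∑ j ∈ Finset.range kN, u j * v j) + V2 := by
            rw [Finset.sum_add_distrib, Finset.sum_add_distrib, ← Finset.mul_sum]
    have h1 : ‖gk‖ ^ 2 ≤ (Real.sqrt U2 + Real.sqrt V2) ^ 2 := by
      have hU : Real.sqrt U2 ^ 2 = U2 := Real.sq_sqrt hU2nonneg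
      have hV : Real.sqrt V2 ^ 2 = V2 := Real.sq_sqrt hV2nonneg
      rw [add_sq, hU, hV, hsum]
      linarith [huv]
    calc ‖gk‖ = Real.sqrt (‖gk‖ ^ 2) := (Real.sqrt_sq (norm_nonneg _)).symm
      _ ≤ Real.sqrt ((Real.sqrt U2 + Real.sqrt V2) ^ 2) := Real.sqrt_le_sqrt h1
      _ = Real.sqrt U2 + Real.sqrt V2 := Real.sqrt_sq (by positivity)
  -- combine
  set F : ℝ := Real.sqrt F2 with hFdef
  have hsqrtU2 : Real.sqrt U2 ≤ r * F := by
    calc Real.sqrt U2 ≤ Real.sqrt ((∑ i ∈ Finset.range kM, c i ^ 2) * F2) :=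
          Real.sqrt_le_sqrt hU2
      _ = Real.sqrt (∑ i ∈ Finset.range kM, c i ^ 2) * F := by
          rw [Real.sqrt_mul hC2nonneg]
      _ ≤ r * F := by
          have : Real.sqrt (∑ i ∈ Finset.range kM, c i ^ 2) ≤ r := by
            calc Real.sqrt (∑ i ∈ Finset.range kM, c i ^ 2)
                ≤ Real.sqrt (r ^ 2) := Real.sqrt_le_sqrt hC2
              _ = r := Real.sqrt_sq hrpos.le
          exact mul_le_mul_of_nonneg_right this (Real.sqrt_nonneg _)
  have hsqrtV2 : Real.sqrt V2 ≤ 2 * e := by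
    calc Real.sqrt V2 ≤ Real.sqrt ((2 * e) ^ 2) := Real.sqrt_le_sqrt hV2
      _ = 2 * e := Real.sqrt_sq (by positivity)
  have hkey : s * (1 - Real.sqrt δ) ≤ r * F + 2 * (Real.sqrt ε * r) := by
    have h1 : s - Real.sqrt δ * s ≤ s - d := by linarith
    have h2 : s - d ≤ ‖gk‖ := hgklow
    have h3 : ‖gk‖ ≤ r * F + 2 * e := by linarith [hgk_le, hsqrtU2, hsqrtV2]
    have hexp : s * (1 - Real.sqrt δ) = s - Real.sqrt δ * s := by ring
    linarith [he]
  rw [hLHS, ← hFdef, ge_iff_le, sub_le_iff_le_add, div_le_iff₀ hrpos]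
  calc s * (1 - Real.sqrt δ) ≤ r * F + 2 * (Real.sqrt ε * r) := hkey
    _ = (F + 2 * Real.sqrt ε) * r := by ring
end
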